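/- arXiv:2307.09129 — 5 statements merged into one kernel-verified Lean document; each statement's English description precedes it below -/
import Mathlib

section
/- Let G be a finite group. The power graph P(G) is a complete graph if and only if G is a cyclic group whose order is 1 or p^r for some prime p and positive integer r. -/
/-- The (undirected) power graph of a group: distinct `u`, `v` are adjacent
iff one is an integer power of the other. -/
def powerGraph (G : Type*) [Group G] : SimpleGraph G where
  Adj u v := u ≠ v ∧ ∃ m : ℤ, u = v ^ m ∨ v = u ^ m
  symm := ⟨by
    rintro u v ⟨huv, m, hm | hm⟩
    · exact ⟨huv.symm, m, Or.inr hm⟩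
    · exact ⟨huv.symm, m, Or.inl hm⟩⟩
  loopless := ⟨fun u h => h.1 rfl⟩


open Subgroup

lemma aux_mem_zpowers_symm {G : Type*} [Group G] [Fintype G] {x y : G}
    (h : x ∈ zpowers y) (hle : orderOf y ≤ orderOf x) : y ∈ zpowers x := by
  have hsub : (zpowers x : Set G) ⊆ zpowers y := by
    exact_mod_cast (zpowers_le.mpr h : zpowers x ≤ zpowers y)
  have hcard : (zpowers y : Set G).ncard ≤ (zpowers x : Set G).ncard := by
    rw [← Nat.card_coe_set_eq, ← Nat.card_coe_set_eq]
    simp only [SetLike.coe_sort_coe, Nat.card_zpowers]; exact hle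
  have : (zpowers x : Set G) = zpowers y :=
    Set.eq_of_subset_of_ncard_le hsub hcard (Set.toFinite _)
  have := SetLike.ext' (p := zpowers x) (q := zpowers y) this
  rw [this]; exact mem_zpowers y

lemma aux_mem_of_dvd {G : Type*} [Group G] [Fintype G] [IsCyclic G] {u v : G}
    (h : orderOf u ∣ orderOf v) : u ∈ zpowers v := by
  classical
  have hS := IsCyclic.card_pow_eq_one_le (α := G) (n := orderOf v) (orderOf_pos v)
  set S : Finset G := {x : G | x ^ orderOf v = 1} with hSdef
  have hT : ((zpowers v : Set G).toFinset : Finset G) ⊆ S := by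
    intro x hx
    simp only [Set.mem_toFinset, SetLike.mem_coe] at hx
    have : orderOf x ∣ orderOf v := orderOf_dvd_of_mem_zpowers hx
    simp only [hSdef, Finset.mem_filter, Finset.mem_univ, true_and, Set.mem_setOf_eq]
    exact orderOf_dvd_iff_pow_eq_one.mp this
  have hcard : (zpowers v : Set G).toFinset.card = orderOf v := by
    simp [Set.toFinset_card, ← Nat.card_eq_fintype_card, Nat.card_zpowers]
  have heq : ((zpowers v : Set G).toFinset : Finset G) = S :=
    Finset.eq_of_subset_of_card_le hT (by omega)
  have hu : u ∈ S := by
    simp only [hSdef, Finset.mem_filter, Finset.mem_univ, true_and, Set.mem_setOf_eq]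
    exact orderOf_dvd_iff_pow_eq_one.mp h
  rw [← heq, Set.mem_toFinset] at hu
  exact hu


/-- For a finite group `G`, the power graph `P(G)` is complete iff `G` is
cyclic of order `1` or `p^r` for some prime `p` and positive integer `r`. -/
theorem powerGraph_complete_iff (G : Type*) [Group G] [Fintype G] :
    powerGraph G = ⊤ ↔
      (IsCyclic G ∧ (Fintype.card G = 1 ∨
        ∃ p r : ℕ, p.Prime ∧ 0 < r ∧ Fintype.card G = p ^ r)) := by
  constructor
  · intro h
    have hadj : ∀ u v : G, u ≠ v → ∃ m : ℤ, u = v ^ m ∨ v = u ^ m := by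
      intro u v huv
      have : (powerGraph G).Adj u v := by rw [h]; exact huv
      exact this.2
    obtain ⟨x, -, hx⟩ := Finset.exists_max_image (Finset.univ : Finset G) orderOf
      ⟨1, Finset.mem_univ 1⟩
    have hgen : ∀ y : G, y ∈ zpowers x := by
      intro y
      by_cases hxy : y = x
      · rw [hxy]; exact mem_zpowers x
      obtain ⟨m, hm | hm⟩ := hadj x y (fun e => hxy e.symm)
      · exact aux_mem_zpowers_symm ⟨m, hm.symm⟩ (hx y (Finset.mem_univ y))
      · exact ⟨m, hm.symm⟩
    have hcyc : IsCyclic G := ⟨x, hgen⟩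
    refine ⟨hcyc, ?_⟩
    by_cases h1 : Fintype.card G = 1
    · exact Or.inl h1
    right
    have hpos : Fintype.card G ≠ 0 := Fintype.card_ne_zero
    obtain ⟨p, hp, hpd⟩ := (Fintype.card G).exists_prime_and_dvd h1
    have hclaim : ∀ {q : ℕ}, q.Prime → q ∣ Fintype.card G → q = p := by
      intro q hq hqd
      by_contra hqp
      haveI := Fact.mk hp
      haveI := Fact.mk hq
      obtain ⟨a, ha⟩ := exists_prime_orderOf_dvd_card p hpd
      obtain ⟨b, hb⟩ := exists_prime_orderOf_dvd_card q hqd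
      have hab : a ≠ b := fun e => hqp (by rw [← hb, ← e, ha])
      obtain ⟨m, hm | hm⟩ := hadj a b hab
      · have : orderOf a ∣ orderOf b := orderOf_dvd_of_mem_zpowers ⟨m, hm.symm⟩
        rw [ha, hb] at this
        exact hqp ((Nat.prime_dvd_prime_iff_eq hp hq).mp this).symm
      · have : orderOf b ∣ orderOf a := orderOf_dvd_of_mem_zpowers ⟨m, hm.symm⟩
        rw [ha, hb] at this
        exact hqp ((Nat.prime_dvd_prime_iff_eq hq hp).mp this)
    have := Nat.eq_prime_pow_of_unique_prime_dvd hpos hclaim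
    refine ⟨p, (Fintype.card G).primeFactorsList.length, hp, ?_, this⟩
    rcases Nat.eq_zero_or_pos (Fintype.card G).primeFactorsList.length with h0 | h0
    · rw [h0, pow_zero] at this; exact absurd this h1
    · exact h0
  · rintro ⟨hcyc, hcard⟩
    ext u v
    simp only [SimpleGraph.top_adj, powerGraph]
    constructor
    · exact fun ⟨h, _⟩ => h
    intro hne
    refine ⟨hne, ?_⟩
    rcases hcard with h1 | ⟨p, r, hp, hr, hpr⟩
    · exact absurd (Fintype.card_le_one_iff.mp h1.le u v) hne
    have hu : orderOf u ∣ p ^ r := hpr ▸ orderOf_dvd_card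
    have hv : orderOf v ∣ p ^ r := hpr ▸ orderOf_dvd_card
    obtain ⟨i, hi, hie⟩ := (Nat.dvd_prime_pow hp).mp hu
    obtain ⟨j, hj, hje⟩ := (Nat.dvd_prime_pow hp).mp hv
    rcases le_total i j with hij | hij
    · have : orderOf u ∣ orderOf v := by rw [hie, hje]; exact pow_dvd_pow p hij
      obtain ⟨m, hm⟩ := aux_mem_of_dvd this
      exact ⟨m, Or.inl hm.symm⟩
    · have : orderOf v ∣ orderOf u := by rw [hie, hje]; exact pow_dvd_pow p hij
      obtain ⟨m, hm⟩ := aux_mem_of_dvd this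
      exact ⟨m, Or.inr hm.symm⟩
end

section
/- Let H be a graph with vertex set {1, …, k}, let G_1, …, G_k be pairwise disjoint graphs where G_i has n_i vertices and is r_i-regular, and let G̃ = ⋁_H{G_1, …, G_k} be their H-join. Fix real numbers α ≠ 0, β, γ, η and set ρ_i = Σ_{j : ij ∈ E(H)} n_j. Suppose u is a real vector on the vertices of G_i satisfying A(G_i)·u = λ·u and whose coordinates sum to 0. Then the vector X on the vertices of G̃ that equals u on the vertices of G_i and 0 on all other vertices satisfies U(G̃)·X = (αλ + β(r_i + ρ_i) + γ)·X; in particular αλ + β(r_i + ρ_i) + γ is an eigenvalue of the universal adjacency matrix U(G̃). -/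
open Matrix

/-- The `H`-join of the family of graphs `G i`: vertices of `G i` and `G j` (for `i ≠ j`)
are all joined iff `i` and `j` are adjacent in `H`; inside each part the edges are those
of `G i`. -/
def HJoin {k : ℕ} (H : SimpleGraph (Fin k)) {V : Fin k → Type*}
    (G : ∀ i, SimpleGraph (V i)) : SimpleGraph (Σ i, V i) where
  Adj u v := (∃ h : u.1 = v.1, (G v.1).Adj (h ▸ u.2) v.2) ∨ (u.1 ≠ v.1 ∧ H.Adj u.1 v.1)
  symm := by
    constructor
    rintro ⟨i, x⟩ ⟨j, y⟩ (⟨h, hadj⟩ | ⟨hne, hH⟩)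
    · dsimp at h
      subst h
      exact Or.inl ⟨rfl, hadj.symm⟩
    · exact Or.inr ⟨Ne.symm hne, hH.symm⟩
  loopless := by
    constructor
    rintro ⟨i, x⟩ (⟨h, hadj⟩ | ⟨hne, _⟩)
    · exact (G i).loopless.irrefl _ hadj
    · exact hne rfl

/-- The universal adjacency matrix `U(G) = α A + β D + γ I + η J` of a finite graph. -/
noncomputable def univAdj {V : Type*} [Fintype V] (G : SimpleGraph V)
    (α β γ η : ℝ) : Matrix V V ℝ :=
  letI := Classical.decEq V
  letI : DecidableRel G.Adj := Classical.decRel _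
  α • G.adjMatrix ℝ + β • Matrix.diagonal (fun v => (G.degree v : ℝ))
    + γ • (1 : Matrix V V ℝ) + η • Matrix.of (fun _ _ => (1 : ℝ))

lemma hjoin_adj_same {k : ℕ} (H : SimpleGraph (Fin k)) {V : Fin k → Type*}
    (G : ∀ i, SimpleGraph (V i)) (i : Fin k) (x y : V i) :
    (HJoin H G).Adj ⟨i, x⟩ ⟨i, y⟩ ↔ (G i).Adj x y := by
  constructor
  · rintro (⟨h, hadj⟩ | ⟨hne, _⟩)
    · exact hadj
    · exact absurd rfl hne
  · intro h
    exact Or.inl ⟨rfl, h⟩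

lemma hjoin_adj_ne {k : ℕ} (H : SimpleGraph (Fin k)) {V : Fin k → Type*}
    (G : ∀ i, SimpleGraph (V i)) {i j : Fin k} (hne : i ≠ j) (x : V i) (y : V j) :
    (HJoin H G).Adj ⟨i, x⟩ ⟨j, y⟩ ↔ H.Adj i j := by
  constructor
  · rintro (⟨h, _⟩ | ⟨_, hH⟩)
    · exact absurd h hne
    · exact hH
  · exact fun h => Or.inr ⟨hne, h⟩

/-- The degree of a vertex of `HJoin H G` lying in the part `j`, when `G j` is
`r j`-regular. Stated for an arbitrary `Fintype` instance on the neighbor set. -/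
lemma hjoin_degree {k : ℕ} (H : SimpleGraph (Fin k)) [DecidableRel H.Adj]
    {V : Fin k → Type*} [∀ i, Fintype (V i)]
    (G : ∀ i, SimpleGraph (V i)) [∀ i, DecidableRel (G i).Adj]
    (r : Fin k → ℕ) (hreg : ∀ i, (G i).IsRegularOfDegree (r i)) (j : Fin k) (x : V j)
    (inst : Fintype ((HJoin H G).neighborSet ⟨j, x⟩)) :
    @SimpleGraph.degree _ (HJoin H G) ⟨j, x⟩ inst
      = r j + ∑ i ∈ Finset.univ.filter (fun i => H.Adj j i), Fintype.card (V i) := by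
  classical
  rw [Subsingleton.elim inst ((HJoin H G).neighborSetFintype ⟨j, x⟩)]
  unfold SimpleGraph.degree
  rw [SimpleGraph.neighborFinset_eq_filter, Finset.card_filter,
    ← Finset.univ_sigma_univ, Finset.sum_sigma,
    ← Finset.add_sum_erase _ _ (Finset.mem_univ j)]
  congr 1
  · have h1 : ∀ y : V j, (if (HJoin H G).Adj ⟨j, x⟩ ⟨j, y⟩ then (1 : ℕ) else 0)
        = if (G j).Adj x y then 1 else 0 := fun y => by simp [hjoin_adj_same]
    rw [Finset.sum_congr rfl fun y _ => h1 y]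
    have h2 := hreg j x
    conv_rhs => rw [← h2]
    unfold SimpleGraph.degree
    rw [SimpleGraph.neighborFinset_eq_filter, Finset.card_filter]
  · have hjj : (if H.Adj j j then Fintype.card (V j) else 0) = 0 := by simp
    rw [Finset.sum_filter, ← Finset.sum_erase (f := fun i => if H.Adj j i then Fintype.card (V i) else 0)
        (a := j) Finset.univ hjj]
    refine Finset.sum_congr rfl fun i hi => ?_
    have hne : j ≠ i := fun h => ((Finset.mem_erase.mp hi).1 h.symm)
    have h3 : ∀ y : V i, (if (HJoin H G).Adj ⟨j, x⟩ ⟨i, y⟩ then (1 : ℕ) else 0)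
        = if H.Adj j i then 1 else 0 := fun y => by simp [hjoin_adj_ne H G hne]
    rw [Finset.sum_congr rfl fun y _ => h3 y]
    by_cases hadj : H.Adj j i <;> simp [hadj, Finset.card_univ]

/-- In the `H`-join of regular graphs `G i` (with `G i` being `r i`-regular on
`n i` vertices), an adjacency eigenvector `u` of `G i₀` whose coordinates sum to `0`,
extended by `0` to the other parts, is an eigenvector of the universal adjacency matrix
`U(⋁_H {G i})` for the eigenvalue `α λ + β (r i₀ + ρ i₀) + γ`,
where `ρ i = Σ_{j : ij ∈ E(H)} n j`. -/
theorem hjoin_univAdj_eigen_of_part {k : ℕ} (H : SimpleGraph (Fin k))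
    [DecidableRel H.Adj] {V : Fin k → Type*} [∀ i, Fintype (V i)]
    (G : ∀ i, SimpleGraph (V i)) [∀ i, DecidableRel (G i).Adj]
    (r : Fin k → ℕ) (hreg : ∀ i, (G i).IsRegularOfDegree (r i))
    (α β γ η : ℝ) (hα : α ≠ 0) (i₀ : Fin k) (lam : ℝ) (u : V i₀ → ℝ)
    (hu : ((G i₀).adjMatrix ℝ).mulVec u = lam • u) (hsum : ∑ x, u x = 0) :
    (univAdj (HJoin H G) α β γ η).mulVec
        (fun v => if h : v.1 = i₀ then u (h ▸ v.2) else 0) =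
      (α * lam
        + β * ((r i₀ : ℝ)
          + ∑ j ∈ Finset.univ.filter (fun j => H.Adj i₀ j), (Fintype.card (V j) : ℝ))
        + γ) •
      (fun v => if h : v.1 = i₀ then u (h ▸ v.2) else 0) := by
  letI : DecidableEq ((i : Fin k) × V i) := Classical.decEq _
  classical
  set X : (Σ i, V i) → ℝ := fun v => if h : v.1 = i₀ then u (h ▸ v.2) else 0 with hX
  set ρ : ℝ := ∑ j ∈ Finset.univ.filter (fun j => H.Adj i₀ j), (Fintype.card (V j) : ℝ)
    with hρ
  have hXapp : ∀ (i : Fin k) (y : V i),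
      X ⟨i, y⟩ = if h : i = i₀ then u (h ▸ y) else 0 := fun _ _ => rfl
  have hXzero : ∀ (i : Fin k), i ≠ i₀ → ∀ y : V i, X ⟨i, y⟩ = 0 := by
    intro i hi y; rw [hXapp, dif_neg hi]
  funext v
  obtain ⟨j, x⟩ := v
  simp only [univAdj, add_mulVec, smul_mulVec, Pi.add_apply, Pi.smul_apply,
    smul_eq_mul]
  -- adjacency part
  have hA : ((HJoin H G).adjMatrix ℝ).mulVec X ⟨j, x⟩ = lam * X ⟨j, x⟩ := by
    rw [mulVec, dotProduct, ← Finset.univ_sigma_univ, Finset.sum_sigma]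
    rw [Finset.sum_eq_single i₀ (fun i _ hne => by
        simp [hXzero i hne]) (fun h => absurd (Finset.mem_univ _) h)]
    by_cases hj : j = i₀
    · subst hj
      have hM : ∀ y : V j, (HJoin H G).adjMatrix ℝ ⟨j, x⟩ ⟨j, y⟩
          = (G j).adjMatrix ℝ x y := by
        intro y
        simp [SimpleGraph.adjMatrix_apply, hjoin_adj_same]
      have hXj : ∀ y : V j, X ⟨j, y⟩ = u y := by
        intro y; rw [hXapp, dif_pos rfl]
      simp only [hM, hXj]
      have := congrFun hu x
      simpa [mulVec, dotProduct] using this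
    · have hM : ∀ y : V i₀, (HJoin H G).adjMatrix ℝ ⟨j, x⟩ ⟨i₀, y⟩
          = if H.Adj j i₀ then 1 else 0 := by
        intro y
        simp [SimpleGraph.adjMatrix_apply, hjoin_adj_ne H G hj]
      have hXj : ∀ y : V i₀, X ⟨i₀, y⟩ = u y := by
        intro y; rw [hXapp, dif_pos rfl]
      simp only [hM, hXj, hXzero j hj, mul_zero]
      rw [← Finset.mul_sum, hsum, mul_zero]
  -- constant (all ones) part
  have hJ : ((Matrix.of fun _ _ => (1 : ℝ)) :
      Matrix (Σ i, V i) (Σ i, V i) ℝ).mulVec X ⟨j, x⟩ = 0 := by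
    rw [mulVec, dotProduct, ← Finset.univ_sigma_univ, Finset.sum_sigma]
    rw [Finset.sum_eq_single i₀ (fun i _ hne => by
        simp [hXzero i hne]) (fun h => absurd (Finset.mem_univ _) h)]
    have hXj : ∀ y : V i₀, X ⟨i₀, y⟩ = u y := by
      intro y; rw [hXapp, dif_pos rfl]
    simp [hXj, hsum]
  have hI : (1 : Matrix ((i : Fin k) × V i) ((i : Fin k) × V i) ℝ) *ᵥ X = X :=
    Matrix.one_mulVec X
  rw [hA, hJ, hI]
  simp only [mulVec_diagonal]
  by_cases hj : j = i₀
  · subst hj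
    rw [hjoin_degree H G r hreg j x _]
    rw [hρ]
    push_cast
    ring
  · rw [hXzero j hj]
    ring
end

section
/- Let n be a positive integer, d a positive divisor of n, and let x, y be distinct elements of H_d = {z ∈ Z_n : gcd(z, n) = d}. Fix real numbers α ≠ 0, β, γ, η. Then the vector X ∈ ℝ^{Z_n} with X_x = 1, X_y = −1 and all other coordinates 0 satisfies U(P(Z_n))·X = Λ·X, where Λ = −α + β(φ(n/d) − 1 + Σ_{d'} φ(n/d')) + γ and the sum runs over the positive divisors d' of n with d' ≠ d such that d divides d' or d' divides d. In particular Λ is an eigenvalue of U(P(Z_n)) of multiplicity at least φ(n/d) − 1. -/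
open Matrix

/-- The (undirected) power graph of an additive group: distinct `u`, `v` are adjacent
iff one is an integer multiple of the other. -/
def addPowerGraph (G : Type*) [AddGroup G] : SimpleGraph G where
  Adj u v := u ≠ v ∧ ∃ m : ℤ, u = m • v ∨ v = m • u
  symm := ⟨by
    rintro u v ⟨huv, m, hm | hm⟩
    · exact ⟨huv.symm, m, Or.inr hm⟩
    · exact ⟨huv.symm, m, Or.inl hm⟩⟩
  loopless := ⟨fun u h => h.1 rfl⟩

open Finset
section Aux
variable {n : ℕ} [NeZero n]

lemma zmod_cast_val (u : ZMod n) : ((u.val : ℕ) : ZMod n) = u :=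
  ZMod.natCast_rightInverse u

lemma exists_zsmul_iff (u v : ZMod n) :
    (∃ m : ℤ, u = m • v) ↔ Nat.gcd v.val n ∣ u.val := by
  constructor
  · rintro ⟨m, hm⟩
    have h1 : ((u.val : ℤ) : ZMod n) = ((m * (v.val : ℤ) : ℤ) : ZMod n) := by
      push_cast
      rw [zmod_cast_val, zmod_cast_val, hm, zsmul_eq_mul]
    rw [ZMod.intCast_eq_intCast_iff] at h1
    have h2 : (n : ℤ) ∣ m * (v.val : ℤ) - (u.val : ℤ) := h1.dvd
    have hv : ((Nat.gcd v.val n : ℕ) : ℤ) ∣ (v.val : ℤ) :=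
      Int.natCast_dvd_natCast.mpr (Nat.gcd_dvd_left _ _)
    have hn : ((Nat.gcd v.val n : ℕ) : ℤ) ∣ (n : ℤ) :=
      Int.natCast_dvd_natCast.mpr (Nat.gcd_dvd_right _ _)
    have key : ((Nat.gcd v.val n : ℕ) : ℤ) ∣ (u.val : ℤ) := by
      have h3 : (u.val : ℤ) = m * (v.val : ℤ) - (m * (v.val : ℤ) - (u.val : ℤ)) := by ring
      rw [h3]
      exact dvd_sub (hv.mul_left m) (hn.trans h2)
    exact_mod_cast key
  · rintro ⟨k, hk⟩
    refine ⟨Nat.gcdA v.val n * k, ?_⟩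
    have key : (u.val : ℤ) = Nat.gcdA v.val n * k * (v.val : ℤ) + n * (Nat.gcdB v.val n * k) := by
      have h1 : (u.val : ℤ) = (Nat.gcd v.val n : ℤ) * k := by exact_mod_cast hk
      rw [h1, Nat.gcd_eq_gcd_ab]; ring
    have hu : ((u.val : ℤ) : ZMod n) = u := by push_cast [zmod_cast_val]; rfl
    have hv' : ((v.val : ℤ) : ZMod n) = v := by push_cast [zmod_cast_val]; rfl
    rw [zsmul_eq_mul]
    calc u = ((u.val : ℤ) : ZMod n) := hu.symm
      _ = ((Nat.gcdA v.val n * k : ℤ) : ZMod n) * ((v.val : ℤ) : ZMod n) := by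
          rw [key]; push_cast; rw [ZMod.natCast_self]; ring
      _ = ((Nat.gcdA v.val n * k : ℤ) : ZMod n) * v := by rw [hv']

lemma adj_iff {d : ℕ} (hdvd : d ∣ n) (x : ZMod n) (hx : Nat.gcd x.val n = d) (z : ZMod n) :
    (addPowerGraph (ZMod n)).Adj x z ↔
      x ≠ z ∧ (d ∣ Nat.gcd z.val n ∨ Nat.gcd z.val n ∣ d) := by
  show (x ≠ z ∧ ∃ m : ℤ, x = m • z ∨ z = m • x) ↔ _
  apply and_congr_right
  intro _
  rw [exists_or, exists_zsmul_iff, exists_zsmul_iff, hx]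
  have h1 : Nat.gcd z.val n ∣ x.val ↔ Nat.gcd z.val n ∣ d := by
    constructor
    · intro h
      rw [← hx]
      exact Nat.dvd_gcd h (Nat.gcd_dvd_right z.val n)
    · intro h
      exact h.trans (hx ▸ Nat.gcd_dvd_left x.val n)
  have h2 : d ∣ z.val ↔ d ∣ Nat.gcd z.val n :=
    ⟨fun h => Nat.dvd_gcd h hdvd, fun h => h.trans (Nat.gcd_dvd_left _ _)⟩
  rw [h1, h2, or_comm]

lemma card_gcd_eq (d' : ℕ) (hd' : d' ∣ n) :
    (Finset.univ.filter (fun z : ZMod n => Nat.gcd z.val n = d')).card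
      = Nat.totient (n / d') := by
  rw [Nat.totient_div_of_dvd hd']
  apply Finset.card_bij (fun z _ => z.val)
  · intro a ha
    simp only [mem_filter, mem_univ, true_and] at ha ⊢
    simp only [mem_range]
    exact ⟨ZMod.val_lt a, by rw [Nat.gcd_comm]; exact ha⟩
  · intro a _ b _ h
    exact ZMod.val_injective n h
  · intro k hk
    simp only [mem_filter, mem_range] at hk
    refine ⟨(k : ZMod n), ?_, ?_⟩
    · simp only [mem_filter, mem_univ, true_and]
      rw [ZMod.val_cast_of_lt hk.1, Nat.gcd_comm]
      exact hk.2
    · rw [ZMod.val_cast_of_lt hk.1]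

lemma degree_eq {d : ℕ} (hd : 0 < d) (hdvd : d ∣ n) (x : ZMod n)
    (hx : Nat.gcd x.val n = d)
    {inst : Fintype ((addPowerGraph (ZMod n)).neighborSet x)} :
    @SimpleGraph.degree _ (addPowerGraph (ZMod n)) x inst + 1 =
      ∑ d' ∈ (Nat.divisors n).filter (fun d' => d ∣ d' ∨ d' ∣ d), Nat.totient (n / d') := by
  classical
  have key : ∀ z : ZMod n, z ∈ (addPowerGraph (ZMod n)).neighborSet x ↔
      (z ≠ x ∧ (d ∣ Nat.gcd z.val n ∨ Nat.gcd z.val n ∣ d)) := by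
    intro z
    rw [SimpleGraph.mem_neighborSet, adj_iff hdvd x hx z, ne_comm]
  rw [← SimpleGraph.card_neighborSet_eq_degree, ← Nat.card_eq_fintype_card]
  have h1 : Nat.card ((addPowerGraph (ZMod n)).neighborSet x)
      = (Finset.univ.filter (fun z : ZMod n =>
          z ≠ x ∧ (d ∣ Nat.gcd z.val n ∨ Nat.gcd z.val n ∣ d))).card := by
    rw [Nat.card_congr (Equiv.subtypeEquivRight key), Nat.card_eq_fintype_card,
      Fintype.card_subtype]
  rw [h1]
  have h2 : (Finset.univ.filter (fun z : ZMod n =>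
        z ≠ x ∧ (d ∣ Nat.gcd z.val n ∨ Nat.gcd z.val n ∣ d)))
      = (Finset.univ.filter (fun z : ZMod n =>
          d ∣ Nat.gcd z.val n ∨ Nat.gcd z.val n ∣ d)).erase x := by
    ext z
    simp only [Finset.mem_filter, Finset.mem_univ, true_and, Finset.mem_erase]
  have hxmem : x ∈ Finset.univ.filter (fun z : ZMod n =>
      d ∣ Nat.gcd z.val n ∨ Nat.gcd z.val n ∣ d) := by
    simp only [Finset.mem_filter, Finset.mem_univ, true_and, hx]
    exact Or.inl dvd_rfl
  rw [h2, Finset.card_erase_add_one hxmem]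
  rw [Finset.card_eq_sum_card_fiberwise (f := fun z : ZMod n => Nat.gcd z.val n)
    (t := (Nat.divisors n).filter (fun d' => d ∣ d' ∨ d' ∣ d))
    (fun z hz => by
      simp only [Finset.mem_coe, Finset.mem_filter, Finset.mem_univ, true_and] at hz ⊢
      exact ⟨Nat.mem_divisors.mpr ⟨Nat.gcd_dvd_right _ _, NeZero.ne n⟩, hz⟩)]
  apply Finset.sum_congr rfl
  intro d' hd'
  simp only [Finset.mem_filter, Nat.mem_divisors] at hd'
  rw [Finset.filter_filter]
  have hsame : (Finset.univ.filter (fun z : ZMod n =>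
        (d ∣ Nat.gcd z.val n ∨ Nat.gcd z.val n ∣ d) ∧ Nat.gcd z.val n = d'))
      = Finset.univ.filter (fun z : ZMod n => Nat.gcd z.val n = d') := by
    ext z
    simp only [Finset.mem_filter, Finset.mem_univ, true_and, and_iff_right_iff_imp]
    intro h
    exact h ▸ hd'.2
  rw [hsame]
  exact card_gcd_eq d' hd'.1.1

lemma sum_split {d : ℕ} (hdvd : d ∣ n) :
    ∑ d' ∈ (Nat.divisors n).filter (fun d' => d ∣ d' ∨ d' ∣ d), Nat.totient (n / d')
      = Nat.totient (n / d)
        + ∑ d' ∈ (Nat.divisors n).filter (fun d' => d' ≠ d ∧ (d ∣ d' ∨ d' ∣ d)),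
            Nat.totient (n / d') := by
  classical
  have hmem : d ∈ (Nat.divisors n).filter (fun d' => d ∣ d' ∨ d' ∣ d) := by
    simp [Nat.mem_divisors, hdvd, NeZero.ne n]
  have hset : (Nat.divisors n).filter (fun d' => d' ≠ d ∧ (d ∣ d' ∨ d' ∣ d))
      = ((Nat.divisors n).filter (fun d' => d ∣ d' ∨ d' ∣ d)).erase d := by
    ext a
    simp only [Finset.mem_erase, Finset.mem_filter]
    tauto
  rw [hset, ← Finset.add_sum_erase _ _ hmem]


lemma degree_cast {d : ℕ} (hd : 0 < d) (hdvd : d ∣ n) (x : ZMod n)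
    (hx : Nat.gcd x.val n = d)
    {inst : Fintype ((addPowerGraph (ZMod n)).neighborSet x)} :
    ((@SimpleGraph.degree _ (addPowerGraph (ZMod n)) x inst : ℕ) : ℝ)
      = (Nat.totient (n / d) : ℝ) - 1
        + ∑ d' ∈ (Nat.divisors n).filter (fun d' => d' ≠ d ∧ (d ∣ d' ∨ d' ∣ d)),
            (Nat.totient (n / d') : ℝ) := by
  have h := degree_eq (inst := inst) hd hdvd x hx
  rw [sum_split hdvd] at h
  have h2 := congrArg (fun t : ℕ => (t : ℝ)) h
  push_cast at h2
  linarith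

end Aux

/-- For a positive divisor `d` of `n` and distinct `x, y ∈ H_d`, the vector
with value `1` at `x`, `-1` at `y` and `0` elsewhere is an eigenvector of `U(P(ℤ_n))`
with eigenvalue `Λ = -α + β (φ(n/d) - 1 + Σ_{d' ∼ d} φ(n/d')) + γ`, the sum running over
positive divisors `d' ≠ d` of `n` with `d ∣ d'` or `d' ∣ d`. -/
theorem univAdj_powerGraph_zmod_eigen (n : ℕ) [NeZero n] (d : ℕ) (hd : 0 < d)
    (hdvd : d ∣ n) (x y : ZMod n)
    (hx : Nat.gcd (ZMod.val x) n = d) (hy : Nat.gcd (ZMod.val y) n = d) (hxy : x ≠ y)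
    (α β γ η : ℝ) (hα : α ≠ 0) :
    (univAdj (addPowerGraph (ZMod n)) α β γ η).mulVec
        (fun z => if z = x then 1 else if z = y then -1 else 0) =
      (-α
        + β * ((Nat.totient (n / d) : ℝ) - 1
          + ∑ d' ∈ (Nat.divisors n).filter (fun d' => d' ≠ d ∧ (d ∣ d' ∨ d' ∣ d)),
              (Nat.totient (n / d') : ℝ))
        + γ) •
      ((fun z => if z = x then 1 else if z = y then -1 else 0) : ZMod n → ℝ) := by
  classical
  have hadjxy : (addPowerGraph (ZMod n)).Adj x y :=
    (adj_iff hdvd x hx y).mpr ⟨hxy, Or.inl (by rw [hy])⟩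
  have hsum : ∀ s : Finset (ZMod n),
      (∑ u ∈ s, (if u = x then (1:ℝ) else if u = y then -1 else 0))
        = (if x ∈ s then (1:ℝ) else 0) - (if y ∈ s then (1:ℝ) else 0) := by
    intro s
    rw [← Finset.sum_ite_eq' s x (fun _ => (1:ℝ)), ← Finset.sum_ite_eq' s y (fun _ => (1:ℝ)),
      ← Finset.sum_sub_distrib]
    refine Finset.sum_congr rfl fun u _ => ?_
    by_cases h1 : u = x
    · subst h1; simp [hxy]
    · by_cases h2 : u = y <;> simp [h1, h2, Ne.symm hxy]
  funext z
  simp only [univAdj, Matrix.add_mulVec, Matrix.smul_mulVec, Pi.add_apply, Pi.smul_apply,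
    smul_eq_mul, Matrix.one_mulVec, SimpleGraph.adjMatrix_mulVec_apply, Matrix.mulVec_diagonal]
  rw [hsum]
  have hJ : ((Matrix.of fun _ _ => (1:ℝ)) *ᵥ
      fun z => if z = x then (1:ℝ) else if z = y then -1 else 0) z = 0 := by
    simp only [Matrix.mulVec, dotProduct, Matrix.of_apply, one_mul]
    rw [hsum]
    simp
  rw [hJ]
  by_cases hzx : z = x
  · subst hzx
    rw [if_neg (SimpleGraph.notMem_neighborFinset_self _ _),
      if_pos ((SimpleGraph.mem_neighborFinset _ _ _).mpr hadjxy)]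
    simp only [eq_self_iff_true, if_true]
    rw [degree_cast hd hdvd z hx]
    ring
  · by_cases hzy : z = y
    · subst hzy
      rw [if_pos ((SimpleGraph.mem_neighborFinset _ _ _).mpr hadjxy.symm),
        if_neg (SimpleGraph.notMem_neighborFinset_self _ _)]
      simp only [if_neg hzx, eq_self_iff_true, if_true]
      rw [degree_cast hd hdvd z hy]
      ring
    · have h1 : x ∈ (addPowerGraph (ZMod n)).neighborFinset z ↔
          (d ∣ Nat.gcd z.val n ∨ Nat.gcd z.val n ∣ d) := by
        rw [SimpleGraph.mem_neighborFinset, SimpleGraph.adj_comm, adj_iff hdvd x hx z,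
          and_iff_right (Ne.symm hzx)]
      have h2 : y ∈ (addPowerGraph (ZMod n)).neighborFinset z ↔
          (d ∣ Nat.gcd z.val n ∨ Nat.gcd z.val n ∣ d) := by
        rw [SimpleGraph.mem_neighborFinset, SimpleGraph.adj_comm, adj_iff hdvd y hy z,
          and_iff_right (Ne.symm hzy)]
      simp only [if_neg hzx, if_neg hzy]
      by_cases hP : (d ∣ Nat.gcd z.val n ∨ Nat.gcd z.val n ∣ d)
      · rw [if_pos (h1.mpr hP), if_pos (h2.mpr hP)]
        ring
      · rw [if_neg (fun h => hP (h1.mp h)), if_neg (fun h => hP (h2.mp h))]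
        ring
end

section
/- Let p and q be distinct primes. Then the characteristic polynomial of the adjacency matrix of the complement of the power graph P(Z_{pq}) equals X^{pq−2}·(X² − (p − 1)(q − 1)); that is, its eigenvalues are 0 with multiplicity pq − 2, √((p − 1)(q − 1)) and −√((p − 1)(q − 1)). -/
open Matrix Polynomial

lemma addPowerGraph_adj {G : Type*} [AddGroup G] (u v : G) :
    (addPowerGraph G).Adj u v ↔ u ≠ v ∧ ∃ m : ℤ, u = m • v ∨ v = m • u := Iff.rfl

lemma psi_bijective (p q : ℕ) (hp : p.Prime) (hq : q.Prime) (hpq : p ≠ q) :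
    haveI : NeZero (p * q) := ⟨Nat.mul_ne_zero hp.ne_zero hq.ne_zero⟩
    Function.Bijective ((ZMod.castHom (dvd_mul_right p q) (ZMod p)).prod
      (ZMod.castHom (dvd_mul_left q p) (ZMod q))) := by
  haveI : NeZero (p * q) := ⟨Nat.mul_ne_zero hp.ne_zero hq.ne_zero⟩
  haveI : NeZero p := ⟨hp.ne_zero⟩
  haveI : NeZero q := ⟨hq.ne_zero⟩
  rw [Fintype.bijective_iff_injective_and_card]
  constructor
  · rw [injective_iff_map_eq_zero]
    intro a ha
    rw [Prod.ext_iff] at ha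
    obtain ⟨h1, h2⟩ := ha
    simp only [RingHom.prod_apply, ZMod.castHom_apply, Prod.fst_zero, Prod.snd_zero] at h1 h2
    rw [← ZMod.natCast_val, ZMod.natCast_eq_zero_iff] at h1 h2
    have hcop : Nat.Coprime p q := (Nat.coprime_primes hp hq).mpr hpq
    have : p * q ∣ a.val := hcop.mul_dvd_of_dvd_of_dvd h1 h2
    have hlt : a.val < p * q := ZMod.val_lt a
    exact (ZMod.val_eq_zero a).mp (Nat.eq_zero_of_dvd_of_lt this hlt)
  · simp [ZMod.card]

lemma mult_iff (p q : ℕ) (hp : p.Prime) (hq : q.Prime) (hpq : p ≠ q) (u v : ZMod (p * q)) :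
    (∃ m : ℤ, u = m • v) ↔
      ((ZMod.castHom (dvd_mul_right p q) (ZMod p)) v = 0 →
        (ZMod.castHom (dvd_mul_right p q) (ZMod p)) u = 0) ∧
      ((ZMod.castHom (dvd_mul_left q p) (ZMod q)) v = 0 →
        (ZMod.castHom (dvd_mul_left q p) (ZMod q)) u = 0) := by
  haveI := Fact.mk hp
  haveI := Fact.mk hq
  set cp := ZMod.castHom (dvd_mul_right p q) (ZMod p)
  set cq := ZMod.castHom (dvd_mul_left q p) (ZMod q)
  constructor
  · rintro ⟨m, rfl⟩
    constructor
    · intro h; rw [zsmul_eq_mul, _root_.map_mul, h, mul_zero]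
    · intro h; rw [zsmul_eq_mul, _root_.map_mul, h, mul_zero]
  · rintro ⟨h1, h2⟩
    set a : ZMod p := if cp v = 0 then 0 else cp u * (cp v)⁻¹ with ha
    set b : ZMod q := if cq v = 0 then 0 else cq u * (cq v)⁻¹ with hb
    obtain ⟨c, hc⟩ := (psi_bijective p q hp hq hpq).surjective (a, b)
    have hcp : cp c = a := congrArg Prod.fst hc
    have hcq : cq c = b := congrArg Prod.snd hc
    have huv : u = c * v := by
      apply (psi_bijective p q hp hq hpq).injective
      ext
      · show cp u = cp (c * v)
        rw [_root_.map_mul, hcp, ha]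
        by_cases hv : cp v = 0
        · simp [hv, h1 hv]
        · field_simp
          rw [if_neg hv]
          rw [mul_div_assoc', mul_div_cancel_left₀ _ hv]
      · show cq u = cq (c * v)
        rw [_root_.map_mul, hcq, hb]
        by_cases hv : cq v = 0
        · simp [hv, h2 hv]
        · field_simp
          rw [if_neg hv]
          rw [mul_div_assoc', mul_div_cancel_left₀ _ hv]
    obtain ⟨m, rfl⟩ := ZMod.intCast_surjective c
    exact ⟨m, by rw [huv, zsmul_eq_mul]⟩

lemma adj_iff_s11 (p q : ℕ) (hp : p.Prime) (hq : q.Prime) (hpq : p ≠ q) (u v : ZMod (p * q)) :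
    (addPowerGraph (ZMod (p * q)))ᶜ.Adj u v ↔
      (((ZMod.castHom (dvd_mul_right p q) (ZMod p)) u ≠ 0 ∧
          (ZMod.castHom (dvd_mul_left q p) (ZMod q)) u = 0) ∧
        ((ZMod.castHom (dvd_mul_right p q) (ZMod p)) v = 0 ∧
          (ZMod.castHom (dvd_mul_left q p) (ZMod q)) v ≠ 0)) ∨
      (((ZMod.castHom (dvd_mul_right p q) (ZMod p)) u = 0 ∧
          (ZMod.castHom (dvd_mul_left q p) (ZMod q)) u ≠ 0) ∧
        ((ZMod.castHom (dvd_mul_right p q) (ZMod p)) v ≠ 0 ∧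
          (ZMod.castHom (dvd_mul_left q p) (ZMod q)) v = 0)) := by
  rw [SimpleGraph.compl_adj, addPowerGraph_adj]
  have h1 := mult_iff p q hp hq hpq u v
  have h2 := mult_iff p q hp hq hpq v u
  constructor
  · rintro ⟨hne, hnadj⟩
    have hnot : ¬ ∃ m : ℤ, u = m • v ∨ v = m • u := fun ⟨m, hm⟩ => hnadj ⟨hne, m, hm⟩
    have nuv : ¬(∃ m : ℤ, u = m • v) := fun ⟨m, h⟩ => hnot ⟨m, Or.inl h⟩
    have nvu : ¬(∃ m : ℤ, v = m • u) := fun ⟨m, h⟩ => hnot ⟨m, Or.inr h⟩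
    rw [h1] at nuv; rw [h2] at nvu
    clear h1 h2 hnot hnadj
    tauto
  · intro h
    have hne : u ≠ v := by
      rintro rfl
      clear h1 h2
      tauto
    refine ⟨hne, ?_⟩
    rintro ⟨-, m, hm | hm⟩
    · have h3 := h1.mp ⟨m, hm⟩
      clear h1 h2 hm
      tauto
    · have h3 := h2.mp ⟨m, hm⟩
      clear h1 h2 hm
      tauto

lemma det_aux {n : Type*} [Fintype n] [DecidableEq n] (f g : n → ℝ) (x : ℝ) (hx : x ≠ 0)
    (hfg : ∀ i, f i * g i = 0) :
    (x • (1 : Matrix n n ℝ) - Matrix.of (fun i j => f i * g j + g i * f j)).det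
      = x ^ (Fintype.card n) * (1 - (∑ i, f i * f i) * (∑ i, g i * g i) / x ^ 2) := by
  set U : Matrix n (Fin 2) ℝ := Matrix.of (fun i k => if k = 0 then f i else g i) with hU
  set V : Matrix (Fin 2) n ℝ := Matrix.of (fun k j => if k = 0 then -g j else -f j) with hV
  have hM : x • (1 : Matrix n n ℝ) - Matrix.of (fun i j => f i * g j + g i * f j)
      = x • (1 : Matrix n n ℝ) + U * V := by
    ext i j
    simp [hU, hV, Matrix.mul_apply, Fin.sum_univ_two, sub_eq_add_neg]
    ring
  have hdet1 : (x • (1 : Matrix n n ℝ)).det = x ^ (Fintype.card n) := by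
    simp [Matrix.det_smul]
  have hA : IsUnit (x • (1 : Matrix n n ℝ)).det := by
    rw [hdet1]; exact (pow_ne_zero _ hx).isUnit
  have hinv : (x • (1 : Matrix n n ℝ))⁻¹ = x⁻¹ • (1 : Matrix n n ℝ) := by
    apply Matrix.inv_eq_right_inv
    rw [Matrix.smul_mul, Matrix.mul_smul, smul_smul, mul_inv_cancel₀ hx, one_smul, Matrix.mul_one]
  rw [hM, Matrix.det_add_mul U V hA, hdet1, hinv]
  congr 1
  have hVU : V * (x⁻¹ • (1 : Matrix n n ℝ)) * U = x⁻¹ • (V * U) := by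
    rw [Matrix.mul_smul, Matrix.mul_one, Matrix.smul_mul]
  rw [hVU, Matrix.det_fin_two]
  have e00 : (V * U) 0 0 = 0 := by
    simp only [Matrix.mul_apply, hU, hV, Matrix.of_apply, if_pos rfl]
    simp only [if_true]
    exact Finset.sum_eq_zero fun i _ => by nlinarith [hfg i]
  have e11 : (V * U) 1 1 = 0 := by
    simp only [Matrix.mul_apply, hU, hV, Matrix.of_apply]
    norm_num
    exact Finset.sum_eq_zero fun i _ => by nlinarith [hfg i]
  have e01 : (V * U) 0 1 = -∑ i, g i * g i := by
    simp only [Matrix.mul_apply, hU, hV, Matrix.of_apply]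
    norm_num
  have e10 : (V * U) 1 0 = -∑ i, f i * f i := by
    simp only [Matrix.mul_apply, hU, hV, Matrix.of_apply]
    norm_num
  simp only [Matrix.add_apply, Matrix.smul_apply, Matrix.one_apply, e00, e01, e10, e11]
  norm_num
  field_simp

lemma eval_charpoly' {n : Type*} [Fintype n] [DecidableEq n] (M : Matrix n n ℝ) (x : ℝ) :
    (M.charpoly).eval x = (x • (1 : Matrix n n ℝ) - M).det := by
  rw [Matrix.charpoly, ← Polynomial.coe_evalRingHom, RingHom.map_det]
  congr 1
  ext i j
  by_cases h : i = j
  · subst h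
    simp [Matrix.charmatrix_apply_eq, Matrix.one_apply]
  · simp [Matrix.charmatrix_apply_ne _ _ _ h, Matrix.one_apply, h]

/-- For distinct primes `p, q`, the characteristic polynomial of the
(real) adjacency matrix of the complement of the power graph `P(ℤ_{pq})` is
`X^{pq-2} (X² - (p-1)(q-1))`; its eigenvalues are `0` with multiplicity `pq - 2`
and `±√((p-1)(q-1))`. -/
theorem charpoly_adj_compl_powerGraph_zmod_pq (p q : ℕ) (hp : p.Prime) (hq : q.Prime)
    (hpq : p ≠ q) :
    haveI : NeZero (p * q) := ⟨Nat.mul_ne_zero hp.ne_zero hq.ne_zero⟩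
    letI : DecidableRel ((addPowerGraph (ZMod (p * q)))ᶜ.Adj) := Classical.decRel _
    Matrix.charpoly (((addPowerGraph (ZMod (p * q)))ᶜ).adjMatrix ℝ) =
      X ^ (p * q - 2) * (X ^ 2 - C (((p : ℝ) - 1) * ((q : ℝ) - 1))) := by
  haveI : NeZero (p * q) := ⟨Nat.mul_ne_zero hp.ne_zero hq.ne_zero⟩
  haveI : NeZero p := ⟨hp.ne_zero⟩
  haveI : NeZero q := ⟨hq.ne_zero⟩
  classical
  set cp := ZMod.castHom (dvd_mul_right p q) (ZMod p) with hcp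
  set cq := ZMod.castHom (dvd_mul_left q p) (ZMod q) with hcq
  have hAdj := adj_iff_s11 p q hp hq hpq
  rw [← hcp, ← hcq] at hAdj
  set f : ZMod (p * q) → ℝ := fun x => if cp x ≠ 0 ∧ cq x = 0 then 1 else 0 with hf
  set g : ZMod (p * q) → ℝ := fun x => if cp x = 0 ∧ cq x ≠ 0 then 1 else 0 with hg
  have hfg : ∀ i, f i * g i = 0 := by
    intro i
    by_cases h : cp i = 0 <;> simp [hf, hg, h]
  have hMat : ∀ (inst : DecidableRel ((addPowerGraph (ZMod (p * q)))ᶜ.Adj)),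
      (@SimpleGraph.adjMatrix ℝ (ZMod (p * q)) ((addPowerGraph (ZMod (p * q)))ᶜ) inst _ _)
      = Matrix.of (fun i j => f i * g j + g i * f j) := by
    intro inst
    ext i j
    rw [SimpleGraph.adjMatrix_apply]
    by_cases h1 : cp i ≠ 0 ∧ cq i = 0 <;> by_cases h2 : cp i = 0 ∧ cq i ≠ 0 <;>
      by_cases h3 : cp j ≠ 0 ∧ cq j = 0 <;> by_cases h4 : cp j = 0 ∧ cq j ≠ 0 <;>
      first
      | exact absurd h2.1 h1.1
      | exact absurd h4.1 h3.1
      | simp [hf, hg, hAdj i j, h1, h2, h3, h4]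
  -- counting
  have hcount : ∀ (P : ZMod (p * q) → Prop) (inst : DecidablePred P) (c : ℕ),
      Nat.card {x // P x} = c →
      ∑ i, (@ite ℝ (P i) (inst i) 1 0) * (@ite ℝ (P i) (inst i) 1 0) = (c : ℝ) := by
    intro P inst c hc
    have : ∀ i, (@ite ℝ (P i) (inst i) 1 0) * (@ite ℝ (P i) (inst i) 1 0)
        = (@ite ℝ (P i) (inst i) 1 0) := by
      intro i; by_cases h : P i <;> simp [h]
    rw [Finset.sum_congr rfl fun i _ => this i, Finset.sum_boole, ← Fintype.card_subtype,
      ← Nat.card_eq_fintype_card, hc]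
  have hbij := psi_bijective p q hp hq hpq
  have hcardP : Nat.card {x : ZMod (p * q) // cp x ≠ 0 ∧ cq x = 0} = p - 1 := by
    rw [Nat.card_congr (((Equiv.ofBijective _ hbij).subtypeEquiv (p := fun x => cp x ≠ 0 ∧ cq x = 0) (q := fun y => y.1 ≠ 0 ∧ y.2 = 0) (fun x => Iff.rfl)).trans
      (Equiv.subtypeProdEquivProd (p := fun a : ZMod p => a ≠ 0) (q := fun b : ZMod q => b = 0))),
      Nat.card_prod]
    simp [ne_eq, Nat.card_eq_fintype_card, Fintype.card_subtype_compl, Fintype.card_subtype_eq,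
      ZMod.card]
  have hcardQ : Nat.card {x : ZMod (p * q) // cp x = 0 ∧ cq x ≠ 0} = q - 1 := by
    rw [Nat.card_congr (((Equiv.ofBijective _ hbij).subtypeEquiv (p := fun x => cp x = 0 ∧ cq x ≠ 0) (q := fun y => y.1 = 0 ∧ y.2 ≠ 0) (fun x => Iff.rfl)).trans
      (Equiv.subtypeProdEquivProd (p := fun a : ZMod p => a = 0) (q := fun b : ZMod q => b ≠ 0))),
      Nat.card_prod]
    simp [ne_eq, Nat.card_eq_fintype_card, Fintype.card_subtype_compl, Fintype.card_subtype_eq,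
      ZMod.card]
  have hsf : ∑ i, f i * f i = (p : ℝ) - 1 := by
    have h0 : ∑ i, f i * f i = ((p - 1 : ℕ) : ℝ) := by
      simpa only [hf] using hcount _ _ _ hcardP
    rw [h0, Nat.cast_sub hp.one_le, Nat.cast_one]
  have hsg : ∑ i, g i * g i = (q : ℝ) - 1 := by
    have h0 : ∑ i, g i * g i = ((q - 1 : ℕ) : ℝ) := by
      simpa only [hg] using hcount _ _ _ hcardQ
    rw [h0, Nat.cast_sub hq.one_le, Nat.cast_one]
  -- now the polynomial identity
  apply Polynomial.eq_of_infinite_eval_eq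
  apply Set.Infinite.mono (s := {x : ℝ | x ≠ 0})
  swap
  · have : ({x : ℝ | x ≠ 0}) = ({0} : Set ℝ)ᶜ := rfl
    rw [this]
    exact (Set.finite_singleton 0).infinite_compl
  intro x hx
  have hx : x ≠ 0 := hx
  show _ = _
  rw [Set.mem_setOf_eq] at *
  rw [eval_charpoly', hMat, det_aux f g x hx hfg, hsf, hsg]
  have h2le : 2 ≤ p * q := le_trans (by norm_num) (Nat.mul_le_mul hp.two_le hq.two_le)
  have hpq2 : p * q - 2 + 2 = p * q := Nat.sub_add_cancel h2le
  have hcard : Fintype.card (ZMod (p * q)) = p * q := ZMod.card _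
  rw [hcard, ← hpq2, pow_add]
  simp only [eval_mul, eval_pow, eval_X, eval_sub, eval_C]
  field_simp
  rw [Nat.add_sub_cancel]
  ring
end

section
/- Let n be a positive integer, fix real numbers α ≠ 0, β, γ, η, and let b a^i and b a^j (i ≠ j in Z_n) be two distinct reflections of the dihedral group D_n. Then the vector X ∈ ℝ^{D_n} with X_{b a^i} = 1, X_{b a^j} = −1 and all other coordinates 0 satisfies U(P(D_n))·X = (β + γ)·X; in particular β + γ is an eigenvalue of U(P(D_n)) of multiplicity at least n − 1. -/
open Matrix

namespace DihedralAux

open DihedralGroup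

variable {n : ℕ}

lemma sr_ne_one (k : ZMod n) : (sr k : DihedralGroup n) ≠ 1 := by
  rw [one_def]; intro h; cases h

lemma sr_zpow (k : ZMod n) (m : ℤ) :
    (sr k : DihedralGroup n) ^ m = 1 ∨ (sr k : DihedralGroup n) ^ m = sr k := by
  have h2 : (sr k : DihedralGroup n) ^ (2 : ℤ) = 1 := by
    rw [zpow_two, sr_mul_self]
  have hm : m = 2 * (m / 2) + m % 2 := (Int.mul_ediv_add_emod m 2).symm
  have key : (sr k : DihedralGroup n) ^ m = (sr k : DihedralGroup n) ^ (m % 2) := by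
    conv_lhs => rw [hm]
    rw [_root_.zpow_add, _root_.zpow_mul, h2, _root_.one_zpow, one_mul]
  rcases Int.emod_two_eq m with h | h <;> rw [key, h]
  · left; exact zpow_zero _
  · right; exact zpow_one _

lemma r_pow (l : ZMod n) (k : ℕ) : (r l : DihedralGroup n) ^ k = r (k • l) := by
  induction k with
  | zero => simp
  | succ k ih => rw [pow_succ, ih, r_mul_r, succ_nsmul]

lemma r_zpow (l : ZMod n) (m : ℤ) : ∃ x, (r l : DihedralGroup n) ^ m = r x := by
  rcases m with k | k
  · exact ⟨_, by rw [show (Int.ofNat k : ℤ) = (k : ℤ) from rfl, zpow_natCast, r_pow]⟩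
  · refine ⟨-((k+1) • l), ?_⟩
    rw [zpow_negSucc, r_pow]
    apply inv_eq_of_mul_eq_one_left
    rw [r_mul_r, neg_add_cancel, one_def]

lemma adj_sr_iff (k : ZMod n) (g : DihedralGroup n) :
    (powerGraph (DihedralGroup n)).Adj g (sr k) ↔ g = 1 := by
  constructor
  · rintro ⟨hne, m, hm | hm⟩
    · rcases sr_zpow k m with h | h
      · rw [hm, h]
      · exact absurd (hm.trans h) hne
    · cases g with
      | r l =>
        obtain ⟨x, hx⟩ := r_zpow l m
        rw [hx] at hm; exact absurd hm (by simp)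
      | sr l =>
        rcases sr_zpow l m with h | h
        · rw [h] at hm; exact absurd hm (sr_ne_one k)
        · rw [h] at hm; exact absurd hm.symm hne
  · rintro rfl
    exact ⟨(sr_ne_one k).symm, 2, Or.inl (by rw [zpow_two, sr_mul_self])⟩

lemma deg_sr [NeZero n] (k : ZMod n)
    {F : Fintype ((powerGraph (DihedralGroup n)).neighborSet (sr k))} :
    @SimpleGraph.degree _ (powerGraph (DihedralGroup n)) (sr k) F = 1 := by
  rw [← SimpleGraph.card_neighborSet_eq_degree]
  refine Fintype.card_eq_one_iff.mpr ⟨⟨1, ?_⟩, ?_⟩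
  · exact ((adj_sr_iff k 1).mpr rfl).symm
  · rintro ⟨x, hx⟩
    exact Subtype.ext ((adj_sr_iff k x).mp hx.symm)

lemma aux_A [NeZero n] [R : DecidableRel (powerGraph (DihedralGroup n)).Adj]
    (i j : ZMod n) (hij : i ≠ j) (g : DihedralGroup n) :
    (@SimpleGraph.adjMatrix ℝ _ (powerGraph (DihedralGroup n)) R _ _).mulVec
      (fun g => if g = sr i then (1:ℝ) else if g = sr j then -1 else 0) g = 0 := by
  have hsrij : (sr i : DihedralGroup n) ≠ sr j := by simpa using hij
  have hsrji : (sr j : DihedralGroup n) ≠ sr i := hsrij.symm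
  have hXsplit : ∀ v : DihedralGroup n,
      (if v = sr i then (1:ℝ) else if v = sr j then -1 else 0)
        = (if v = sr i then (1:ℝ) else 0) + (if v = sr j then -1 else 0) := by
    intro v
    by_cases h1 : v = sr i
    · subst h1; simp [hsrij]
    · by_cases h2 : v = sr j <;> simp [h1, h2, Ne.symm hij]
  rw [SimpleGraph.adjMatrix_mulVec_apply]
  simp only [hXsplit]
  rw [Finset.sum_add_distrib, Finset.sum_ite_eq', Finset.sum_ite_eq']
  have m1 : (sr i ∈ (powerGraph (DihedralGroup n)).neighborFinset g) ↔ g = 1 := by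
    rw [SimpleGraph.mem_neighborFinset, adj_sr_iff]
  have m2 : (sr j ∈ (powerGraph (DihedralGroup n)).neighborFinset g) ↔ g = 1 := by
    rw [SimpleGraph.mem_neighborFinset, adj_sr_iff]
  split_ifs with hi hj hj
  · ring
  · exact absurd (m2.mpr (m1.mp hi)) hj
  · exact absurd (m1.mpr (m2.mp hj)) hi
  · ring

end DihedralAux

open DihedralAux DihedralGroup in
/-- For two distinct reflections `b a^i`, `b a^j` of the dihedral group
`D_n`, the vector with value `1` at `b a^i`, `-1` at `b a^j` and `0` elsewhere is an
eigenvector of `U(P(D_n))` with eigenvalue `β + γ`. -/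
theorem univAdj_powerGraph_dihedral_reflection_eigen (n : ℕ) [NeZero n]
    (i j : ZMod n) (hij : i ≠ j) (α β γ η : ℝ) (hα : α ≠ 0) :
    (univAdj (powerGraph (DihedralGroup n)) α β γ η).mulVec
        (fun g => if g = DihedralGroup.sr i then 1
          else if g = DihedralGroup.sr j then -1 else 0) =
      (β + γ) •
      ((fun g => if g = DihedralGroup.sr i then 1
          else if g = DihedralGroup.sr j then -1 else 0) : DihedralGroup n → ℝ) := by
  set X : DihedralGroup n → ℝ := fun g => if g = sr i then 1
          else if g = sr j then -1 else 0 with hX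
  have hsrij : (sr i : DihedralGroup n) ≠ sr j := by simpa using hij
  have hXsplit : ∀ g, X g = (if g = sr i then (1:ℝ) else 0) + (if g = sr j then -1 else 0) := by
    intro g
    by_cases h1 : g = sr i
    · subst h1; simp [hX, hsrij]
    · by_cases h2 : g = sr j
      · subst h2; simp [hX, h1, hsrij.symm]
      · simp [hX, h1, h2]
  have hsum : ∑ v, X v = 0 := by
    simp only [hXsplit, Finset.sum_add_distrib, Finset.sum_ite_eq',
      Finset.mem_univ, if_true]
    ring
  unfold univAdj
  rw [show Classical.decEq (DihedralGroup n) = instDecidableEqDihedralGroup from Subsingleton.elim _ _]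
  funext g
  rw [add_mulVec, add_mulVec, add_mulVec, smul_mulVec, smul_mulVec,
    smul_mulVec, smul_mulVec, one_mulVec]
  have hJ : (Matrix.of (fun _ _ => (1:ℝ))).mulVec X g = 0 := by
    simp [Matrix.mulVec, dotProduct, hsum]
  simp only [Pi.add_apply, Pi.smul_apply, smul_eq_mul]
  rw [@aux_A n _ (Classical.decRel _) i j hij g, hJ, Matrix.mulVec_diagonal]
  by_cases h1 : g = sr i
  · subst h1; rw [deg_sr]; push_cast; ring
  · by_cases h2 : g = sr j
    · subst h2; rw [deg_sr]; push_cast; ring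
    · have hg : X g = 0 := by simp [hX, h1, h2]
      rw [hg]; ring
end
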